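/- Let f : [a,b] → ℝ be continuous and piecewise linear with no horizontal segments, and let m > 0 be the minimum absolute value of the slopes of its linear segments. Then every direction v = e^{iθ} with 0 < θ < π/2 and tan θ > 1/m is admissible, i.e., for each local extremum P of f there is ε > 0 such that all points of the graph of f with x-coordinate within ε of that of P (other than P itself) lie strictly on one side of the line through P orthogonal to v. -/

import Mathlib

open Real Set

/-- Height of a point of the plane in the direction `e^{iθ}`. -/
noncomputable def heightF (θ : ℝ) (p : ℝ × ℝ) : ℝ :=
  p.1 * Real.cos θ + p.2 * Real.sin θ

/-- `f` is continuous piecewise linear on `[a,b]` with vertices `x 0 < ⋯ < x n`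
and slope `c i` on the `i`-th segment. -/
def PiecewiseLinearOn (f : ℝ → ℝ) (a b : ℝ) (n : ℕ) (x : Fin (n + 1) → ℝ)
    (c : Fin n → ℝ) : Prop :=
  x 0 = a ∧ x (Fin.last n) = b ∧ StrictMono x ∧
    ∀ i : Fin n, ∀ t ∈ Set.Icc (x i.castSucc) (x i.succ),
      f t = f (x i.castSucc) + c i * (t - x i.castSucc)

/-- The admissibility condition of direction `e^{iθ}` at the point `(p, f p)`:
all nearby graph points lie strictly on one open side of the line through
`(p, f p)` orthogonal to `e^{iθ}`. -/
def AdmissibleAt (f : ℝ → ℝ) (a b θ p : ℝ) : Prop :=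
  ∃ ε > 0,
    (∀ x ∈ Set.Icc a b, |x - p| < ε → x ≠ p →
        heightF θ (p, f p) < heightF θ (x, f x)) ∨
    (∀ x ∈ Set.Icc a b, |x - p| < ε → x ≠ p →
        heightF θ (x, f x) < heightF θ (p, f p))

lemma exists_seg_right {n : ℕ} {x : Fin (n + 1) → ℝ} (hx : StrictMono x) {p : ℝ}
    (h0 : x 0 ≤ p) (hn : p < x (Fin.last n)) :
    ∃ i : Fin n, x i.castSucc ≤ p ∧ p < x i.succ := by
  classical
  set S : Finset (Fin (n + 1)) := Finset.univ.filter (fun i => x i ≤ p) with hS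
  have h0S : (0 : Fin (n + 1)) ∈ S := by simp [hS, h0]
  set j := S.max' ⟨0, h0S⟩ with hj
  have hjS : j ∈ S := S.max'_mem _
  have hjp : x j ≤ p := by
    have := hjS; simpa [hS] using this
  have hjlt : (j : ℕ) < n := by
    by_contra h
    have hjn : (j : ℕ) = n := le_antisymm (Nat.le_of_lt_succ j.isLt) (not_lt.mp h)
    have : j = Fin.last n := Fin.ext hjn
    rw [this] at hjp
    linarith
  refine ⟨⟨(j : ℕ), hjlt⟩, ?_, ?_⟩
  · have hcast : ((⟨(j : ℕ), hjlt⟩ : Fin n).castSucc) = j := Fin.ext rfl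
    rw [hcast]; exact hjp
  · by_contra h
    push_neg at h
    have hmem : (⟨(j : ℕ), hjlt⟩ : Fin n).succ ∈ S := by
      simp only [hS, Finset.mem_filter, Finset.mem_univ, true_and]
      exact h
    have hle := S.le_max' _ hmem
    have hv := Fin.le_def.mp hle
    rw [← hj] at hv
    simp only [Fin.val_succ] at hv
    omega

lemma exists_seg_left {n : ℕ} {x : Fin (n + 1) → ℝ} (hx : StrictMono x) {p : ℝ}
    (h0 : x 0 < p) (hn : p ≤ x (Fin.last n)) :
    ∃ i : Fin n, x i.castSucc < p ∧ p ≤ x i.succ := by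
  classical
  set S : Finset (Fin (n + 1)) := Finset.univ.filter (fun i => p ≤ x i) with hS
  have h0S : Fin.last n ∈ S := by simp [hS, hn]
  set j := S.min' ⟨_, h0S⟩ with hj
  have hjS : j ∈ S := S.min'_mem _
  have hjp : p ≤ x j := by
    have := hjS; simpa [hS] using this
  have hjpos : 0 < (j : ℕ) := by
    by_contra h
    have : j = 0 := Fin.ext (by rw [Fin.val_zero]; omega)
    rw [this] at hjp
    linarith
  have hjlt : (j : ℕ) - 1 < n := by have := j.isLt; omega
  refine ⟨⟨(j : ℕ) - 1, hjlt⟩, ?_, ?_⟩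
  · by_contra h
    push_neg at h
    have hmem : (⟨(j : ℕ) - 1, hjlt⟩ : Fin n).castSucc ∈ S := by
      simp only [hS, Finset.mem_filter, Finset.mem_univ, true_and]
      exact h
    have hle := S.min'_le _ hmem
    have : (j : ℕ) ≤ ((⟨(j : ℕ) - 1, hjlt⟩ : Fin n).castSucc : ℕ) := hle
    simp at this
    omega
  · have hsucc : ((⟨(j : ℕ) - 1, hjlt⟩ : Fin n).succ) = j := Fin.ext (by simp; omega)
    rw [hsucc]; exact hjp

/-- if `f` is continuous piecewise linear with no horizontal segments
and all slopes of absolute value at least `m > 0`, then every direction `e^{iθ}`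
with `0 < θ < π/2` and `tan θ > 1/m` is admissible. -/
theorem admissible_of_tan_gt (f : ℝ → ℝ) (a b m : ℝ) (hab : a < b) (hm : 0 < m)
    (n : ℕ) (x : Fin (n + 1) → ℝ) (c : Fin n → ℝ)
    (hpl : PiecewiseLinearOn f a b n x c)
    (hslope : ∀ i, m ≤ |c i|)
    (θ : ℝ) (hθ0 : 0 < θ) (hθ1 : θ < Real.pi / 2) (htan : 1 / m < Real.tan θ) :
    ∀ p ∈ Set.Icc a b,
      (IsLocalMaxOn f (Set.Icc a b) p ∨ IsLocalMinOn f (Set.Icc a b) p) →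
      AdmissibleAt f a b θ p := by
  obtain ⟨hx0, hxn, hmono, hseg⟩ := hpl
  have hpi := Real.pi_pos
  have hc : 0 < Real.cos θ := Real.cos_pos_of_mem_Ioo ⟨by linarith, hθ1⟩
  have hs : 0 < Real.sin θ := Real.sin_pos_of_pos_of_lt_pi hθ0 (by linarith)
  have hms : Real.cos θ < m * Real.sin θ := by
    rw [Real.tan_eq_sin_div_cos, div_lt_div_iff₀ hm hc] at htan
    linarith
  have hn0 : 0 < n := by
    rcases Nat.eq_zero_or_pos n with h | h
    · subst h
      have : x (Fin.last 0) = x 0 := rfl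
      rw [hx0, hxn] at this
      linarith
    · exact h
  intro p hp hext
  -- key slope bound near p
  have right : ∃ δ > 0, ∀ y ∈ Set.Icc a b, p < y → y - p < δ →
      m * |y - p| ≤ |f y - f p| := by
    by_cases hpb : p < b
    · obtain ⟨i, hi1, hi2⟩ := exists_seg_right (p := p) hmono
        (by rw [hx0]; exact hp.1) (by rw [hxn]; exact hpb)
      refine ⟨x i.succ - p, by linarith, fun y hy hpy hyd => ?_⟩
      have hyI : y ∈ Set.Icc (x i.castSucc) (x i.succ) := ⟨by linarith, by linarith⟩
      have hpI : p ∈ Set.Icc (x i.castSucc) (x i.succ) := ⟨hi1, le_of_lt hi2⟩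
      have h1 := hseg i y hyI
      have h2 := hseg i p hpI
      have hd : f y - f p = c i * (y - p) := by rw [h1, h2]; ring
      rw [hd, abs_mul]
      exact mul_le_mul_of_nonneg_right (hslope i) (abs_nonneg _)
    · refine ⟨1, one_pos, fun y hy hpy _ => absurd hpy (not_lt.mpr ?_)⟩
      exact le_trans hy.2 (not_lt.mp hpb)
  have left : ∃ δ > 0, ∀ y ∈ Set.Icc a b, y < p → p - y < δ →
      m * |y - p| ≤ |f y - f p| := by
    by_cases hap : a < p
    · obtain ⟨i, hi1, hi2⟩ := exists_seg_left (p := p) hmono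
        (by rw [hx0]; exact hap) (by rw [hxn]; exact hp.2)
      refine ⟨p - x i.castSucc, by linarith, fun y hy hpy hyd => ?_⟩
      have hyI : y ∈ Set.Icc (x i.castSucc) (x i.succ) := ⟨by linarith, by linarith⟩
      have hpI : p ∈ Set.Icc (x i.castSucc) (x i.succ) := ⟨le_of_lt hi1, hi2⟩
      have h1 := hseg i y hyI
      have h2 := hseg i p hpI
      have hd : f y - f p = c i * (y - p) := by rw [h1, h2]; ring
      rw [hd, abs_mul]
      exact mul_le_mul_of_nonneg_right (hslope i) (abs_nonneg _)
    · refine ⟨1, one_pos, fun y hy hpy _ => absurd hpy (not_lt.mpr ?_)⟩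
      exact le_trans (not_lt.mp hap) hy.1
  obtain ⟨δR, hδR, hR⟩ := right
  obtain ⟨δL, hδL, hL⟩ := left
  have key : ∀ y ∈ Set.Icc a b, |y - p| < min δL δR → y ≠ p →
      m * |y - p| ≤ |f y - f p| := by
    intro y hy hyd hyne
    rcases lt_trichotomy y p with h | h | h
    · refine hL y hy h ?_
      have := abs_lt.mp (lt_of_lt_of_le hyd (min_le_left _ _))
      linarith
    · exact absurd h hyne
    · refine hR y hy h ?_
      have := abs_lt.mp (lt_of_lt_of_le hyd (min_le_right _ _))
      linarith
  rcases hext with hmax | hmin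
  · obtain ⟨ε₂, hε₂, hsub⟩ := Metric.mem_nhdsWithin_iff.mp hmax
    refine ⟨min (min δL δR) ε₂, lt_min (lt_min hδL hδR) hε₂, Or.inr ?_⟩
    intro y hy hyd hyne
    have h1 : m * |y - p| ≤ |f y - f p| :=
      key y hy (lt_of_lt_of_le hyd (min_le_left _ _)) hyne
    have h2 : f y ≤ f p := by
      have : y ∈ Metric.ball p ε₂ ∩ Set.Icc a b :=
        ⟨by rw [Metric.mem_ball, Real.dist_eq]; exact lt_of_lt_of_le hyd (min_le_right _ _), hy⟩
      exact hsub this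
    have habs : 0 < |y - p| := abs_pos.mpr (sub_ne_zero.mpr hyne)
    have h3 : m * |y - p| ≤ f p - f y := by
      rw [abs_sub_comm (f y) (f p),
        abs_of_nonneg (show (0:ℝ) ≤ f p - f y by linarith)] at h1
      exact h1
    simp only [heightF]
    have h4 : (y - p) * Real.cos θ ≤ |y - p| * Real.cos θ :=
      mul_le_mul_of_nonneg_right (le_abs_self _) hc.le
    have h5 : 0 < |y - p| * (m * Real.sin θ - Real.cos θ) :=
      mul_pos habs (by linarith)
    have h6 : 0 ≤ (f p - f y - m * |y - p|) * Real.sin θ :=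
      mul_nonneg (by linarith) hs.le
    nlinarith [h4, h5, h6]
  · obtain ⟨ε₂, hε₂, hsub⟩ := Metric.mem_nhdsWithin_iff.mp hmin
    refine ⟨min (min δL δR) ε₂, lt_min (lt_min hδL hδR) hε₂, Or.inl ?_⟩
    intro y hy hyd hyne
    have h1 : m * |y - p| ≤ |f y - f p| :=
      key y hy (lt_of_lt_of_le hyd (min_le_left _ _)) hyne
    have h2 : f p ≤ f y := by
      have : y ∈ Metric.ball p ε₂ ∩ Set.Icc a b :=
        ⟨by rw [Metric.mem_ball, Real.dist_eq]; exact lt_of_lt_of_le hyd (min_le_right _ _), hy⟩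
      exact hsub this
    have habs : 0 < |y - p| := abs_pos.mpr (sub_ne_zero.mpr hyne)
    have h3 : m * |y - p| ≤ f y - f p := by
      rw [abs_of_nonneg (show (0:ℝ) ≤ f y - f p by linarith)] at h1
      exact h1
    simp only [heightF]
    have h4 : (p - y) * Real.cos θ ≤ |y - p| * Real.cos θ :=
      mul_le_mul_of_nonneg_right (by rw [abs_sub_comm]; exact le_abs_self _) hc.le
    have h5 : 0 < |y - p| * (m * Real.sin θ - Real.cos θ) :=
      mul_pos habs (by linarith)
    have h6 : 0 ≤ (f y - f p - m * |y - p|) * Real.sin θ :=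
      mul_nonneg (by linarith) hs.le
    nlinarith [h4, h5, h6]
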